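/- arXiv:2402.02793 — 2 statements merged into one kernel-verified Lean document; each statement's English description precedes it below -/
import Mathlib

section
/- Let k > 0 with k ≠ 1, set λ = |(k+1)/(k−1)|, let γ > 0 and let α ∈ (0,2π) with α ≠ π. Assume |sin(γ(α−π))| = λ·|sin(γπ)|, and assume it is NOT the case that γ is an integer ≥ 2 and α = lπ/γ for some integer l with 1 ≤ l ≤ 2γ−1 and l ≠ γ. Then the matrix Y(γ,α) has rank 3. -/
/-- The 4×4 matrix `Y(γ,α)` (with conductivity parameter `k`) encoding the
transmission conditions of the corner eigenvalue problem. -/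
noncomputable def cornerMatrix (k γ α : ℝ) : Matrix (Fin 4) (Fin 4) ℝ :=
  !![1, 0, -Real.cos (2 * Real.pi * γ), -Real.sin (2 * Real.pi * γ);
     0, k, Real.sin (2 * Real.pi * γ), -Real.cos (2 * Real.pi * γ);
     Real.cos (γ * α), Real.sin (γ * α), -Real.cos (γ * α), -Real.sin (γ * α);
     -(k * Real.sin (γ * α)), k * Real.cos (γ * α), Real.sin (γ * α), -Real.cos (γ * α)]

private lemma det_fin_four' (M : Matrix (Fin 4) (Fin 4) ℝ) : M.det =
    M 0 0 * (M 1 1 * (M 2 2 * M 3 3 - M 2 3 * M 3 2) - M 1 2 * (M 2 1 * M 3 3 - M 2 3 * M 3 1)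
      + M 1 3 * (M 2 1 * M 3 2 - M 2 2 * M 3 1))
    - M 0 1 * (M 1 0 * (M 2 2 * M 3 3 - M 2 3 * M 3 2) - M 1 2 * (M 2 0 * M 3 3 - M 2 3 * M 3 0)
      + M 1 3 * (M 2 0 * M 3 2 - M 2 2 * M 3 0))
    + M 0 2 * (M 1 0 * (M 2 1 * M 3 3 - M 2 3 * M 3 1) - M 1 1 * (M 2 0 * M 3 3 - M 2 3 * M 3 0)
      + M 1 3 * (M 2 0 * M 3 1 - M 2 1 * M 3 0))
    - M 0 3 * (M 1 0 * (M 2 1 * M 3 2 - M 2 2 * M 3 1) - M 1 1 * (M 2 0 * M 3 2 - M 2 2 * M 3 0)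
      + M 1 2 * (M 2 0 * M 3 1 - M 2 1 * M 3 0)) := by
  rw [Matrix.det_succ_row_zero]
  simp [Fin.sum_univ_succ, Matrix.det_fin_three,
    show (Fin.succ 2 : Fin 4) = 3 from rfl,
    show (Fin.castSucc 2 : Fin 4) = 2 from rfl,
    show (Fin.succAbove (1 : Fin 4) (2 : Fin 3)) = 3 from rfl,
    show (Fin.succAbove (2 : Fin 4) (2 : Fin 3)) = 3 from rfl,
    show (Fin.succAbove (3 : Fin 4) (2 : Fin 3)) = 2 from rfl]
  ring

private def genMatrix (k c s C S : ℝ) : Matrix (Fin 4) (Fin 4) ℝ :=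
  !![1, 0, -c, -s; 0, k, s, -c; C, S, -C, -S; -(k*S), k*C, S, -C]

private lemma gen_det (k c s C S : ℝ) : (genMatrix k c s C S).det =
    s*C*S - c*S^2 + k*S^2 + k*C^2 - 2*k*s*C*S + k*s^2*S^2 + k*s^2*C^2
      - 2*k*c*C^2 + k*c^2*S^2 + k*c^2*C^2 + k^2*s*C*S - k^2*c*S^2 := by
  rw [det_fin_four']; simp [genMatrix]; ring

private lemma gen_minor00 (k c s C S : ℝ) :
    ((genMatrix k c s C S).submatrix ![0,1,2] ![0,1,2]).det = -(s*S) - k*C + k*c*C := by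
  rw [Matrix.det_fin_three]; simp [genMatrix]; ring

private lemma gen_minor11 (k c s C S : ℝ) :
    ((genMatrix k c s C S).submatrix ![0,1,3] ![0,1,3]).det = -(k*C) + k*c*C - k^2*s*S := by
  rw [Matrix.det_fin_three]; simp [genMatrix]; ring

private lemma gen_minor01 (k c s C S : ℝ) :
    ((genMatrix k c s C S).submatrix ![0,1,2] ![0,1,3]).det = c*S - k*S + k*s*C := by
  rw [Matrix.det_fin_three]; simp [genMatrix]; ring

private lemma gen_minor10 (k c s C S : ℝ) :
    ((genMatrix k c s C S).submatrix ![0,1,3] ![0,1,2]).det = k*S - k*s*C - k^2*c*S := by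
  rw [Matrix.det_fin_three]; simp [genMatrix]; ring

private lemma gen_minor2 (k c s C S : ℝ) :
    ((genMatrix k c s C S).submatrix ![0,2,3] ![0,1,2]).det
      = S^2 + k*C^2 - k*c*S^2 - k*c*C^2 := by
  rw [Matrix.det_fin_three]; simp [genMatrix]; ring

private lemma rank_ge_three_of_minor (A : Matrix (Fin 4) (Fin 4) ℝ) (f g : Fin 3 → Fin 4)
    (h : (A.submatrix f g).det ≠ 0) : 3 ≤ A.rank := by
  classical
  set B : Matrix (Fin 3) (Fin 4) ℝ := Matrix.of fun i j => if j = f i then 1 else 0 with hB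
  set Cm : Matrix (Fin 4) (Fin 3) ℝ := Matrix.of fun i j => if i = g j then 1 else 0 with hC
  have hfac : B * A * Cm = A.submatrix f g := by
    ext i j
    simp [hB, hC, Matrix.mul_apply, Fin.sum_univ_four]
  have hu : IsUnit (A.submatrix f g) :=
    (Matrix.isUnit_iff_isUnit_det _).2 (isUnit_iff_ne_zero.2 h)
  have h3 : (A.submatrix f g).rank = 3 := by
    rw [Matrix.rank_of_isUnit _ hu]; simp
  calc (3:ℕ) = (A.submatrix f g).rank := h3.symm
    _ = (B * A * Cm).rank := by rw [hfac]
    _ ≤ (B * A).rank := Matrix.rank_mul_le_left _ _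
    _ ≤ A.rank := Matrix.rank_mul_le_right _ _

private lemma rank_le_three_of_det (A : Matrix (Fin 4) (Fin 4) ℝ) (h : A.det = 0) :
    A.rank ≤ 3 := by
  obtain ⟨v, hv0, hv⟩ := (Matrix.exists_mulVec_eq_zero_iff).2 h
  have hker : v ∈ LinearMap.ker A.mulVecLin := by
    simpa [Matrix.mulVecLin_apply] using hv
  have hne : LinearMap.ker A.mulVecLin ≠ ⊥ := by
    intro hb
    rw [hb, Submodule.mem_bot] at hker
    exact hv0 hker
  have hpos : 0 < Module.finrank ℝ (LinearMap.ker A.mulVecLin) := by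
    rw [Module.finrank_pos_iff]
    exact Submodule.nontrivial_iff_ne_bot.mpr hne
  have hsum := LinearMap.finrank_range_add_finrank_ker A.mulVecLin
  rw [Module.finrank_fin_fun] at hsum
  have hr : A.rank = Module.finrank ℝ (LinearMap.range A.mulVecLin) := rfl
  omega

/-- for `k > 0`, `k ≠ 1`, `γ > 0`, `α ∈ (0,2π) ∖ {π}` with
`|sin(γ(α−π))| = λ·|sin(γπ)|`, if it is not the case that `γ` is an integer `≥ 2`
and `α = lπ/γ` for some integer `l` with `1 ≤ l ≤ 2γ−1`, `l ≠ γ`, then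
`rank Y(γ,α) = 3`. -/
theorem cornerMatrix_rank_three (k γ α : ℝ) (hk : 0 < k) (hk1 : k ≠ 1)
    (hγ : 0 < γ) (hα0 : 0 < α) (hα2 : α < 2 * Real.pi) (hαπ : α ≠ Real.pi)
    (heq : |Real.sin (γ * (α - Real.pi))| = |(k + 1) / (k - 1)| * |Real.sin (γ * Real.pi)|)
    (hnot : ¬ ∃ m : ℕ, 2 ≤ m ∧ γ = (m : ℝ) ∧
      ∃ l : ℕ, 1 ≤ l ∧ l ≤ 2 * m - 1 ∧ l ≠ m ∧ α = (l : ℝ) * Real.pi / (m : ℝ)) :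
    (cornerMatrix k γ α).rank = 3 := by
  have hπ : (0:ℝ) < Real.pi := Real.pi_pos
  have hk1' : k - 1 ≠ 0 := sub_ne_zero.2 hk1
  have hM : cornerMatrix k γ α = genMatrix k (Real.cos (2 * Real.pi * γ))
      (Real.sin (2 * Real.pi * γ)) (Real.cos (γ * α)) (Real.sin (γ * α)) := rfl
  -- Step 1: sin (γπ) ≠ 0
  have hs0 : Real.sin (γ * Real.pi) ≠ 0 := by
    intro h0
    obtain ⟨n, hn⟩ := Real.sin_eq_zero_iff.mp h0
    have hγn : γ = (n : ℝ) := (mul_right_cancel₀ (ne_of_gt hπ) hn).symm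
    have hn0 : 0 < n := by
      have : (0:ℝ) < (n:ℝ) := hγn ▸ hγ
      exact_mod_cast this
    have ha0 : Real.sin (γ * (α - Real.pi)) = 0 := by
      have : |Real.sin (γ * (α - Real.pi))| = 0 := by rw [heq, h0]; simp
      exact abs_eq_zero.mp this
    obtain ⟨p, hp⟩ := Real.sin_eq_zero_iff.mp ha0
    -- γ * α = (p + n) * π
    have hga : γ * α = ((p + n : ℤ) : ℝ) * Real.pi := by
      push_cast
      have : γ * (α - Real.pi) = γ * α - γ * Real.pi := by ring
      rw [this] at hp
      rw [hγn] at hp ⊢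
      linarith [hp]
    have hαval : α = ((p + n : ℤ) : ℝ) * Real.pi / γ := by
      field_simp
      linarith [hga]
    set l : ℤ := p + n with hl
    have hl0 : 0 < l := by
      by_contra hneg
      push_neg at hneg
      have : ((l:ℝ)) * Real.pi / γ ≤ 0 := by
        apply div_nonpos_of_nonpos_of_nonneg
        · have : (l:ℝ) ≤ 0 := by exact_mod_cast hneg
          nlinarith
        · linarith
      rw [← hαval] at this
      linarith
    have hl2 : l < 2 * n := by
      have h1 : ((l:ℝ)) * Real.pi / γ < 2 * Real.pi := hαval ▸ hα2
      rw [div_lt_iff₀ hγ] at h1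
      have : (l:ℝ) < 2 * (n:ℝ) := by nlinarith [hγn ▸ h1]
      exact_mod_cast this
    have hln : l ≠ n := by
      intro hle
      apply hαπ
      rw [hαval, hle, hγn]
      field_simp
    have hn2 : 2 ≤ n := by omega
    apply hnot
    refine ⟨n.toNat, by omega, ?_, l.toNat, by omega, by omega, by omega, ?_⟩
    · rw [hγn]; exact_mod_cast (Int.toNat_of_nonneg (by omega : (0:ℤ) ≤ n)).symm
    · have e1 : ((l.toNat : ℕ) : ℝ) = (l : ℝ) := by
        exact_mod_cast congrArg (Int.cast : ℤ → ℝ) (Int.toNat_of_nonneg (by omega : (0:ℤ) ≤ l))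
      have e2 : ((n.toNat : ℕ) : ℝ) = (n : ℝ) := by
        exact_mod_cast congrArg (Int.cast : ℤ → ℝ) (Int.toNat_of_nonneg (by omega : (0:ℤ) ≤ n))
      rw [hαval, hγn, e1, e2]
  -- cos(2πγ) ≠ 1
  have hcne : Real.cos (2 * Real.pi * γ) ≠ 1 := by
    intro h1
    obtain ⟨n, hn⟩ := (Real.cos_eq_one_iff _).mp h1
    have hγn : γ = (n : ℝ) := by
      have h2 : (n:ℝ) * (2 * Real.pi) = 2 * Real.pi * γ := hn
      have : (2 * Real.pi) ≠ 0 := by positivity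
      nlinarith [h2]
    apply hs0
    rw [hγn]
    exact Real.sin_int_mul_pi n
  -- Step 2: determinant formula and vanishing
  have hdetf : (cornerMatrix k γ α).det =
      (k+1)^2 * Real.sin (γ * Real.pi)^2 - (k-1)^2 * Real.sin (γ * (α - Real.pi))^2 := by
    rw [hM, gen_det]
    rw [show 2 * Real.pi * γ = 2 * (γ * Real.pi) by ring, Real.sin_two_mul, Real.cos_two_mul,
      show γ * (α - Real.pi) = γ * α - γ * Real.pi by ring, Real.sin_sub]
    linear_combination
      (-(Real.sin (γ*α))^2 - 2*k*(Real.sin (γ*α))^2 - 4*k*(Real.cos (γ*α))^2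
        + 4*k*(Real.cos (γ*Real.pi))^2*(Real.sin (γ*α))^2
        + 4*k*(Real.cos (γ*Real.pi))^2*(Real.cos (γ*α))^2
        - k^2*(Real.sin (γ*α))^2) * Real.sin_sq_add_cos_sq (γ*Real.pi)
      + ((1 + 2*k + k^2) * (Real.sin (γ*Real.pi))^2) * Real.sin_sq_add_cos_sq (γ*α)
  have habs : |Real.sin (γ*(α-Real.pi))| * |k-1| = |k+1| * |Real.sin (γ*Real.pi)| := by
    rw [heq, abs_div]
    field_simp
  have hsq : Real.sin (γ*(α-Real.pi))^2 * (k-1)^2 = (k+1)^2 * Real.sin (γ*Real.pi)^2 := by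
    have h2 := congrArg (· ^ 2) habs
    simpa [mul_pow, sq_abs] using h2
  have hdet0 : (cornerMatrix k γ α).det = 0 := by
    rw [hdetf]; linarith
  -- Step 3: rank ≥ 3 via a nonvanishing 3×3 minor
  have hk2 : k^2 - 1 ≠ 0 := by
    intro h
    have : (k-1)*(k+1) = 0 := by linarith
    rcases mul_eq_zero.mp this with h' | h'
    · exact hk1' h'
    · linarith
  have hrank3 : 3 ≤ (cornerMatrix k γ α).rank := by
    by_cases hS : Real.sin (γ * α) = 0
    · -- minor (023,012) = k (1 - c) ≠ 0
      apply rank_ge_three_of_minor _ ![0,2,3] ![0,1,2]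
      rw [hM, gen_minor2]
      have hC : Real.cos (γ*α)^2 = 1 := by
        have := Real.sin_sq_add_cos_sq (γ*α)
        rw [hS] at this; nlinarith
      rw [hS, hC]
      intro h
      apply hcne
      have hval : k * (1 - Real.cos (2*Real.pi*γ)) = 0 := by linarith [h]
      rcases mul_eq_zero.mp hval with h' | h'
      · exact absurd h' (ne_of_gt hk)
      · linarith
    · by_cases hsz : Real.sin (2 * Real.pi * γ) = 0
      · -- c ≠ 0, use minors (012,013), (013,012)
        have hc0 : Real.cos (2*Real.pi*γ) ≠ 0 := by
          intro h
          have := Real.sin_sq_add_cos_sq (2*Real.pi*γ)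
          rw [hsz, h] at this; norm_num at this
        by_cases h01 : ((cornerMatrix k γ α).submatrix ![0,1,2] ![0,1,3]).det = 0
        · apply rank_ge_three_of_minor _ ![0,1,3] ![0,1,2]
          intro h10
          rw [hM, gen_minor10] at h10
          rw [hM, gen_minor01] at h01
          have : (1 - k^2) * (Real.cos (2*Real.pi*γ) * Real.sin (γ*α)) = 0 := by
            linear_combination h01 + h10
          rcases mul_eq_zero.mp this with h' | h'
          · apply hk2; linarith
          · rcases mul_eq_zero.mp h' with h'' | h''
            · exact hc0 h''
            · exact hS h''
        · exact rank_ge_three_of_minor _ ![0,1,2] ![0,1,3] h01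
      · -- s ≠ 0, use minors (012,012), (013,013)
        by_cases h00 : ((cornerMatrix k γ α).submatrix ![0,1,2] ![0,1,2]).det = 0
        · apply rank_ge_three_of_minor _ ![0,1,3] ![0,1,3]
          intro h11
          rw [hM, gen_minor11] at h11
          rw [hM, gen_minor00] at h00
          have : (k^2 - 1) * (Real.sin (2*Real.pi*γ) * Real.sin (γ*α)) = 0 := by
            linear_combination h00 - h11
          rcases mul_eq_zero.mp this with h' | h'
          · exact hk2 h'
          · rcases mul_eq_zero.mp h' with h'' | h''
            · exact hsz h''
            · exact hS h''
        · exact rank_ge_three_of_minor _ ![0,1,2] ![0,1,2] h00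
  have hrankle := rank_le_three_of_det _ hdet0
  omega
end

section
/- Let k > 0 with k ≠ 1 and let α ∈ (0,2π) with α ≠ π. Then for every real γ with 0 < |γ| ≤ 1/2 the matrix Y(γ,α) is invertible, i.e. det Y(γ,α) ≠ 0. (This is the fact used to solve uniquely the linear system determining the singular part of the shape derivative, where γ = γ₁ − 1 ∈ (−1/2, 0).) -/
private lemma sin_sq_abs' (x : ℝ) : Real.sin |x| ^ 2 = Real.sin x ^ 2 := by
  rcases abs_cases x with ⟨h, _⟩ | ⟨h, _⟩ <;> rw [h]
  rw [Real.sin_neg]; ring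

private lemma cornerMatrix_det_eq (k γ α : ℝ) :
    (cornerMatrix k γ α).det =
      (k + 1) ^ 2 * Real.sin (Real.pi * γ) ^ 2
        - (k - 1) ^ 2 * Real.sin (γ * (α - Real.pi)) ^ 2 := by
  have e1 : Real.sin (Real.pi * γ) ^ 2 = 1 / 2 - Real.cos (2 * Real.pi * γ) / 2 := by
    rw [Real.sin_sq_eq_half_sub]; ring_nf
  have e2 : Real.sin (γ * (α - Real.pi)) ^ 2
      = 1 / 2 - Real.cos (2 * (γ * α) - 2 * Real.pi * γ) / 2 := by
    rw [Real.sin_sq_eq_half_sub]; ring_nf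
  have e3 : Real.cos (2 * (γ * α) - 2 * Real.pi * γ)
      = Real.cos (2 * (γ * α)) * Real.cos (2 * Real.pi * γ)
        + Real.sin (2 * (γ * α)) * Real.sin (2 * Real.pi * γ) := Real.cos_sub _ _
  have e4 : Real.cos (2 * (γ * α)) = 1 - 2 * Real.sin (γ * α) ^ 2 := by
    rw [Real.cos_two_mul, Real.cos_sq']; ring
  have e5 : Real.sin (2 * (γ * α)) = 2 * Real.sin (γ * α) * Real.cos (γ * α) :=
    Real.sin_two_mul _
  have ha : Real.sin (γ * α) ^ 2 + Real.cos (γ * α) ^ 2 = 1 :=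
    Real.sin_sq_add_cos_sq _
  have h2 : Real.sin (2 * Real.pi * γ) ^ 2 + Real.cos (2 * Real.pi * γ) ^ 2 = 1 :=
    Real.sin_sq_add_cos_sq _
  rw [e1, e2, e3, e4, e5]
  simp [cornerMatrix, Matrix.det_succ_row_zero, Fin.sum_univ_succ, Fin.succAbove, Matrix.cons_val_succ, show (Fin.castSucc 2 : Fin 4) = 2 from rfl, show (Fin.castSucc 1 : Fin 4) = 1 from rfl, show (Fin.castSucc 0 : Fin 4) = 0 from rfl]
  linear_combination
    (k + k * Real.sin (2 * Real.pi * γ) ^ 2 - 2 * k * Real.cos (2 * Real.pi * γ)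
      + k * Real.cos (2 * Real.pi * γ) ^ 2) * ha + k * h2

/-- for `k > 0`, `k ≠ 1`, `α ∈ (0,2π) ∖ {π}` and every real `γ`
with `0 < |γ| ≤ 1/2`, the matrix `Y(γ,α)` is invertible, i.e. `det Y(γ,α) ≠ 0`. -/
theorem cornerMatrix_det_ne_zero (k α : ℝ) (hk : 0 < k) (hk1 : k ≠ 1)
    (hα0 : 0 < α) (hα2 : α < 2 * Real.pi) (hαπ : α ≠ Real.pi) :
    ∀ γ : ℝ, 0 < |γ| → |γ| ≤ 1 / 2 → (cornerMatrix k γ α).det ≠ 0 := by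
  intro γ hγ0 hγh
  have hπ := Real.pi_pos
  rw [cornerMatrix_det_eq]
  -- bounds
  have habs1 : |γ * (α - Real.pi)| ≤ |Real.pi * γ| := by
    rw [abs_mul, abs_mul]
    have : |α - Real.pi| ≤ Real.pi := by
      rw [abs_le]; constructor <;> linarith
    calc |γ| * |α - Real.pi| ≤ |γ| * Real.pi := by
          exact mul_le_mul_of_nonneg_left this (abs_nonneg _)
      _ = |Real.pi| * |γ| := by rw [abs_of_pos hπ]; ring
  have habs2 : |Real.pi * γ| ≤ Real.pi / 2 := by
    rw [abs_mul, abs_of_pos hπ]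
    nlinarith [abs_nonneg γ]
  have h0 : 0 < |Real.pi * γ| := by
    rw [abs_mul, abs_of_pos hπ]; positivity
  -- sin monotone on [0, π/2]
  have hmono : Real.sin |γ * (α - Real.pi)| ≤ Real.sin |Real.pi * γ| := by
    apply Real.strictMonoOn_sin.monotoneOn
    · constructor
      · linarith [abs_nonneg (γ * (α - Real.pi))]
      · linarith
    · constructor
      · linarith [abs_nonneg (Real.pi * γ)]
      · linarith
    · exact habs1
  have hsin_pos : 0 < Real.sin |Real.pi * γ| := by
    apply Real.sin_pos_of_pos_of_lt_pi h0
    linarith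
  have hsin_nonneg : 0 ≤ Real.sin |γ * (α - Real.pi)| := by
    apply Real.sin_nonneg_of_nonneg_of_le_pi (abs_nonneg _)
    linarith
  have hsq : Real.sin (γ * (α - Real.pi)) ^ 2 ≤ Real.sin (Real.pi * γ) ^ 2 := by
    rw [← sin_sq_abs' (γ * (α - Real.pi)), ← sin_sq_abs' (Real.pi * γ)]
    exact pow_le_pow_left₀ hsin_nonneg hmono 2
  have hsq_pos : 0 < Real.sin (Real.pi * γ) ^ 2 := by
    rw [← sin_sq_abs' (Real.pi * γ)]; positivity
  have hk2 : (k - 1) ^ 2 < (k + 1) ^ 2 := by nlinarith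
  nlinarith [sq_nonneg (k - 1), sq_nonneg (Real.sin (γ * (α - Real.pi)))]
end
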